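/- Let n ≥ 1 and let N be a commutative ℂ-subalgebra of Mat_n(ℂ) that is closed under conjugate transpose. Let N' = {x ∈ Mat_n(ℂ) : x·y = y·x for all y ∈ N} be the centralizer of N in Mat_n(ℂ). Then the center of N', namely Z(N') = {x ∈ N' : x·y = y·x for all y ∈ N'}, is equal to N. -/

import Mathlib

open Matrix

noncomputable def matE (n : ℕ) : Matrix (Fin n) (Fin n) ℂ ≃ₗ[ℂ] EuclideanSpace ℂ (Fin n × Fin n) where
  toFun m := WithLp.toLp 2 (fun p : Fin n × Fin n => m p.1 p.2)
  invFun v := Matrix.of fun i j => v (i, j)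
  map_add' := fun _ _ => rfl
  map_smul' := fun _ _ => rfl
  left_inv := fun _ => rfl
  right_inv := fun _ => rfl

lemma inner_matE (n : ℕ) (u v : Matrix (Fin n) (Fin n) ℂ) :
    (inner ℂ (matE n u) (matE n v) : ℂ) = (uᴴ * v).trace := by
  simp only [PiLp.inner_apply, RCLike.inner_apply, Matrix.trace, Matrix.diag,
    Matrix.mul_apply, conjTranspose_apply, Fintype.sum_prod_type, matE,
    LinearEquiv.coe_mk, Complex.star_def, PiLp.toLp_apply]
  change ∑ x, ∑ y, v x y * (starRingEnd ℂ) (u x y) = _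
  rw [Finset.sum_comm]
  exact Finset.sum_congr rfl fun _ _ => Finset.sum_congr rfl fun _ _ => mul_comm _ _

/-- adjoint of left multiplication -/
lemma inner_matE_mul (n : ℕ) (a w u : Matrix (Fin n) (Fin n) ℂ) :
    (inner ℂ (matE n w) (matE n (a * u)) : ℂ) = inner ℂ (matE n (aᴴ * w)) (matE n u) := by
  rw [inner_matE, inner_matE, conjTranspose_mul, conjTranspose_conjTranspose,
    Matrix.mul_assoc]

lemma mem_of_commutes (n : ℕ) (N : Subalgebra ℂ (Matrix (Fin n) (Fin n) ℂ))
    (hstar : ∀ y ∈ N, yᴴ ∈ N) (x : Matrix (Fin n) (Fin n) ℂ)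
    (hx2 : ∀ y : Matrix (Fin n) (Fin n) ℂ, (∀ g ∈ N, g * y = y * g) → x * y = y * x) :
    x ∈ N := by
  classical
  set E := EuclideanSpace ℂ (Fin n × Fin n)
  set K : Submodule ℂ E := (Subalgebra.toSubmodule N).map (matE n).toLinearMap with hK
  have memK : ∀ {m : Matrix (Fin n) (Fin n) ℂ}, m ∈ N → matE n m ∈ K :=
    fun {m} hm => ⟨m, hm, rfl⟩
  set P : Matrix (Fin n) (Fin n) ℂ →ₗ[ℂ] Matrix (Fin n) (Fin n) ℂ :=
    ((matE n).symm.toLinearMap.comp (K.subtype.comp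
      K.orthogonalProjectionOnto.toLinearMap)).comp (matE n).toLinearMap with hP
  have hPapply : ∀ m, P m = (matE n).symm ((K.orthogonalProjectionOnto (matE n m) : E)) :=
    fun m => rfl
  -- range of P is in N
  have hPmem : ∀ m, P m ∈ N := by
    intro m
    obtain ⟨w, hw, hwe⟩ := (K.orthogonalProjectionOnto (matE n m)).2
    rw [hPapply, ← hwe]
    simpa using hw
  -- P is identity on N
  have hPid : ∀ a ∈ N, P a = a := by
    intro a ha
    rw [hPapply, ← Submodule.starProjection_apply, Submodule.starProjection_eq_self_iff.mpr (memK ha)]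
    simp
  -- P kills orthogonal complement
  have hPker : ∀ m, matE n m ∈ Kᗮ → P m = 0 := by
    intro m hm
    rw [hPapply, Submodule.orthogonalProjectionOnto_apply_of_mem_orthogonal hm]
    simp
  -- P is N-linear
  have hPa : ∀ a ∈ N, ∀ m, P (a * m) = a * P m := by
    intro a ha m
    have hsum : P m + (m - P m) = m := by abel
    have h1 : P (a * P m) = a * P m := hPid _ (N.mul_mem ha (hPmem m))
    have h2 : P (a * (m - P m)) = 0 := by
      apply hPker
      rw [Submodule.mem_orthogonal]
      rintro u ⟨w, hw, rfl⟩
      show (inner ℂ (matE n w) (matE n (a * (m - P m))) : ℂ) = 0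
      rw [inner_matE_mul]
      have horth : matE n (m - P m) ∈ Kᗮ := by
        have he : matE n (m - P m) = matE n m - (K.orthogonalProjectionOnto (matE n m) : E) := by
          rw [map_sub, hPapply]; simp
        rw [he, ← Submodule.starProjection_apply]
        exact Submodule.sub_starProjection_mem_orthogonal (K := K) (matE n m)
      exact (Submodule.mem_orthogonal _ _).mp horth _ (memK (N.mul_mem (hstar a ha) hw))
    calc P (a * m) = P (a * P m + a * (m - P m)) := by rw [← mul_add, hsum]
    _ = a * P m := by rw [map_add, h1, h2, add_zero]
  -- the component matrices of P
  set y : Fin n → Fin n → Matrix (Fin n) (Fin n) ℂ :=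
    fun k l => Matrix.of fun i j => P (single j l 1) i k with hy
  -- key matrix identity
  have hmulstd : ∀ (a : Matrix (Fin n) (Fin n) ℂ) (r l : Fin n),
      a * single r l 1 = ∑ j, a j r • single j l 1 := by
    intro a r l
    ext p q
    simp [Matrix.mul_apply, single, Matrix.sum_apply, Finset.sum_ite_eq,
      mul_ite, ite_and]
  -- y k l commutes with N
  have hyc : ∀ k l, ∀ a ∈ N, a * y k l = y k l * a := by
    intro k l a ha
    ext i r
    have e1 : (a * y k l) i r = (a * P (single r l 1)) i k := by
      simp [hy, Matrix.mul_apply]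
    have e2 : (y k l * a) i r = ∑ j, a j r * P (single j l 1) i k := by
      simp [hy, Matrix.mul_apply, mul_comm]
    rw [e1, e2, ← hPa a ha, hmulstd, map_sum]
    simp only [_root_.map_smul, Matrix.sum_apply, Matrix.smul_apply, smul_eq_mul]
  -- entrywise expansion of P
  have hPentry : ∀ (m : Matrix (Fin n) (Fin n) ℂ) (s k : Fin n),
      P m s k = ∑ j, ∑ l, m j l * P (single j l 1) s k := by
    intro m s k
    have hm : m = ∑ j, ∑ l, m j l • single j l (1 : ℂ) := by
      conv_lhs => rw [matrix_eq_sum_single m]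
      refine Finset.sum_congr rfl fun j _ => Finset.sum_congr rfl fun l _ => ?_
      rw [smul_single, smul_eq_mul, mul_one]
    conv_lhs => rw [hm]
    rw [map_sum]
    simp only [map_sum, _root_.map_smul, Matrix.sum_apply, Matrix.smul_apply, smul_eq_mul]
  -- final computation: x = P x
  have h1 : P (1 : Matrix (Fin n) (Fin n) ℂ) = 1 := hPid 1 N.one_mem
  have hone : ∀ s k : Fin n, (1 : Matrix (Fin n) (Fin n) ℂ) s k
      = ∑ l, P (single l l 1) s k := by
    intro s k
    rw [← h1, hPentry]
    simp [Matrix.one_apply]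
  have hfinal : x = P x := by
    ext i k
    calc x i k = ∑ s, x i s * (1 : Matrix (Fin n) (Fin n) ℂ) s k := by
          simp [Matrix.one_apply, Finset.mul_sum]
      _ = ∑ s, ∑ l, x i s * P (single l l 1) s k := by
          refine Finset.sum_congr rfl fun s _ => ?_
          rw [hone s k, Finset.mul_sum]
      _ = ∑ l, ∑ s, x i s * P (single l l 1) s k := Finset.sum_comm
      _ = ∑ l, (x * y k l) i l := by
          refine Finset.sum_congr rfl fun l _ => ?_
          simp [hy, Matrix.mul_apply]
      _ = ∑ l, (y k l * x) i l := by
          refine Finset.sum_congr rfl fun l _ => ?_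
          rw [hx2 (y k l) (hyc k l)]
      _ = ∑ l, ∑ s, P (single s l 1) i k * x s l := by
          refine Finset.sum_congr rfl fun l _ => ?_
          simp [hy, Matrix.mul_apply]
      _ = ∑ s, ∑ l, x s l * P (single s l 1) i k := by
          rw [Finset.sum_comm]
          exact Finset.sum_congr rfl fun s _ => Finset.sum_congr rfl fun l _ => mul_comm _ _
      _ = P x i k := (hPentry x i k).symm
  rw [hfinal]
  exact hPmem x

/-- Let `N` be a commutative ℂ-subalgebra of `Mat_n(ℂ)` closed under
conjugate transpose, and `N'` its centralizer. Then the center of `N'`,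
i.e. the elements of `N'` commuting with all of `N'`, equals `N`. -/
theorem center_of_commutant_eq (n : ℕ) (hn : 1 ≤ n)
    (N : Subalgebra ℂ (Matrix (Fin n) (Fin n) ℂ))
    (hcomm : ∀ x ∈ N, ∀ y ∈ N, x * y = y * x)
    (hstar : ∀ y ∈ N, yᴴ ∈ N) :
    {x : Matrix (Fin n) (Fin n) ℂ |
        x ∈ Subalgebra.centralizer ℂ (N : Set (Matrix (Fin n) (Fin n) ℂ)) ∧
        ∀ y ∈ Subalgebra.centralizer ℂ (N : Set (Matrix (Fin n) (Fin n) ℂ)),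
          x * y = y * x} = (N : Set (Matrix (Fin n) (Fin n) ℂ)) := by
  ext x
  simp only [Set.mem_setOf_eq, SetLike.mem_coe]
  constructor
  · rintro ⟨hx1, hx2⟩
    refine mem_of_commutes n N hstar x (fun y hy => hx2 y ?_)
    exact Subalgebra.mem_centralizer_iff ℂ |>.mpr hy
  · intro hx
    refine ⟨(Subalgebra.mem_centralizer_iff ℂ).mpr (fun g hg => hcomm g hg x hx), ?_⟩
    intro y hy
    exact (Subalgebra.mem_centralizer_iff ℂ).mp hy x hx
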